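/- Let F₊, F₋, X, Π, g₊, g₋, Λ, U, Δ be complex numbers with F₋ ≠ 0, X ≠ 0 and F₊ = F₋·e^{iΔ}, let t ∈ ℝ and n ∈ ℤ, and suppose t·(g₊ − g₋) = −(n·Λ + t·U). Then the 2×2 matrix product [[F₋, Π²·F₋·X⁻¹·e^{−2t·g₋}], [0, F₋⁻¹]] · [[e^{t(g₊ − g₋)}, 0], [0, e^{−t(g₊ − g₋)}]] · [[F₊⁻¹, −Π²·F₊·X⁻¹·e^{−2t·g₊}], [0, F₊]] equals the diagonal matrix [[e^{−(nΛ + tU + iΔ)}, 0], [0, e^{nΛ + tU + iΔ}]]. -/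

import Mathlib

open Complex Matrix

/-- the key matrix identity of the second deformation step: the
deformed jump matrix on the gap equals the constant diagonal model jump matrix. -/
theorem deformed_jump_is_model_jump
    (Fp Fm X P gp gm Λ U Δ : ℂ) (t : ℝ) (n : ℤ)
    (hFm : Fm ≠ 0) (hX : X ≠ 0)
    (hF : Fp = Fm * Complex.exp (Complex.I * Δ))
    (hg : (t : ℂ) * (gp - gm) = -((n : ℂ) * Λ + (t : ℂ) * U)) :
    !![Fm, P^2 * Fm * X⁻¹ * Complex.exp (-(2*(t : ℂ)*gm)); 0, Fm⁻¹] *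
      !![Complex.exp ((t : ℂ) * (gp - gm)), 0;
         0, Complex.exp (-((t : ℂ) * (gp - gm)))] *
      !![Fp⁻¹, -(P^2 * Fp * X⁻¹ * Complex.exp (-(2*(t : ℂ)*gp))); 0, Fp] =
    !![Complex.exp (-((n : ℂ) * Λ + (t : ℂ) * U + Complex.I * Δ)), 0;
       0, Complex.exp ((n : ℂ) * Λ + (t : ℂ) * U + Complex.I * Δ)] := by
  have e1 : Complex.exp ((t : ℂ) * (gp - gm)) =
      Complex.exp ((t : ℂ) * gp) * (Complex.exp ((t : ℂ) * gm))⁻¹ := by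
    rw [← Complex.exp_neg, ← Complex.exp_add]; ring_nf
  have e2 : Complex.exp (-((t : ℂ) * (gp - gm))) =
      (Complex.exp ((t : ℂ) * gp))⁻¹ * Complex.exp ((t : ℂ) * gm) := by
    rw [← Complex.exp_neg, ← Complex.exp_add]; ring_nf
  have e3 : Complex.exp (-(2*(t : ℂ)*gm)) =
      (Complex.exp ((t : ℂ) * gm) * Complex.exp ((t : ℂ) * gm))⁻¹ := by
    rw [← Complex.exp_add, ← Complex.exp_neg]; ring_nf
  have e4 : Complex.exp (-(2*(t : ℂ)*gp)) =
      (Complex.exp ((t : ℂ) * gp) * Complex.exp ((t : ℂ) * gp))⁻¹ := by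
    rw [← Complex.exp_add, ← Complex.exp_neg]; ring_nf
  have e5 : Complex.exp (-((n : ℂ) * Λ + (t : ℂ) * U + Complex.I * Δ)) =
      (Complex.exp ((n : ℂ) * Λ + (t : ℂ) * U) * Complex.exp (Complex.I * Δ))⁻¹ := by
    rw [← Complex.exp_add, ← Complex.exp_neg]
  have e6 : Complex.exp ((n : ℂ) * Λ + (t : ℂ) * U + Complex.I * Δ) =
      Complex.exp ((n : ℂ) * Λ + (t : ℂ) * U) * Complex.exp (Complex.I * Δ) := by
    rw [← Complex.exp_add]
  have eg : Complex.exp ((t : ℂ) * gp) * (Complex.exp ((t : ℂ) * gm))⁻¹ =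
      (Complex.exp ((n : ℂ) * Λ + (t : ℂ) * U))⁻¹ := by
    rw [← e1, hg, ← Complex.exp_neg]
  rw [e1, e2, e3, e4, e5, e6, hF]
  have hA : Complex.exp ((t : ℂ) * gp) ≠ 0 := Complex.exp_ne_zero _
  have hB : Complex.exp ((t : ℂ) * gm) ≠ 0 := Complex.exp_ne_zero _
  have hC : Complex.exp (Complex.I * Δ) ≠ 0 := Complex.exp_ne_zero _
  have hD : Complex.exp ((n : ℂ) * Λ + (t : ℂ) * U) ≠ 0 := Complex.exp_ne_zero _
  generalize hAv : Complex.exp ((t : ℂ) * gp) = A at *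
  generalize hBv : Complex.exp ((t : ℂ) * gm) = B at *
  generalize hCv : Complex.exp (Complex.I * Δ) = C at *
  generalize hDv : Complex.exp ((n : ℂ) * Λ + (t : ℂ) * U) = D at *
  have hD' : A * B⁻¹ = D⁻¹ := eg
  ext i j
  fin_cases i <;> fin_cases j <;>
    simp [Matrix.mul_apply, Fin.sum_univ_two] <;> field_simp
  · have : A * D = B := by
      field_simp at hD'
      linear_combination hD'
    linear_combination this
  · ring
  · have : A * D = B := by
      field_simp at hD'
      linear_combination hD'
    linear_combination (-1) * this
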